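/- (Uniform growth speed in singularity sets.) Let (Ω,ℱ,ℙ) be a probability space, b ≥ 2 an integer, N ≥ 1, Λ an index set, ε̃ = (ε_n)_{n≥1} and η̃ = (η_n)_{n≥1} positive sequences, (ρ_j)_{j≥0} a sequence of positive reals, (ψ_j)_{j≥0} and (S_j)_{j≥0} sequences of positive integers with S_j ≥ ψ_j for all j. Suppose that for each word w ∈ A^* one is given families of random finite positive Borel measures (m^w_λ)_{λ∈Λ} and (μ^w_λ)_{λ∈Λ} on [0,1] whose elements have support [0,1], reals (α_λ)_{λ∈Λ} with α_λ > 0, and nonnegative random variables U^w and (V^w_n)_{n≥1} such that: (i) the random vectors (U^w, (V^w_n)_{n≥1}), w ∈ A^*, all have the same distribution as a fixed (U, (V_n)_{n≥1}) with values in ℝ_+ × ℝ_+^ℕ; (ii) almost surely, for every w ∈ A^* and every n ≥ ψ_{|w|}, U^w ≤ inf_{λ∈Λ} ‖m^w_λ‖ and V^w_n ≥ sup_{λ∈Λ} S_n^{N,ε_n,η_n}(m^w_λ, μ^w_λ, α_λ). If ∑_{j≥0} b^j ℙ(U ≤ b^{−ρ_j}) < ∞ and ∑_{j≥0} b^j b^{ρ_j}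 ∑_{k≥S_j} E(V_k) < ∞, then with probability one, for all sufficiently large j, for every w ∈ A^j and every λ ∈ Λ one has m^w_λ(E^{μ^w_λ}_{α_λ, S_j}(N, ε̃)) ≥ ‖m^w_λ‖/2. -/

import Mathlib

open MeasureTheory

/-- The closed `b`-adic interval `[k b^{-n}, (k+1) b^{-n}]`. -/
noncomputable def badicI (b n k : ℕ) : Set ℝ :=
  Set.Icc ((k : ℝ) / (b : ℝ) ^ n) (((k : ℝ) + 1) / (b : ℝ) ^ n)

/-- The index of the `b`-adic interval of generation `n` containing `t` (for `t ∈ [0,1)`). -/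
noncomputable def idx (b n : ℕ) (t : ℝ) : ℕ :=
  min ⌊t * (b : ℝ) ^ n⌋₊ (b ^ n - 1)

/-- The quantity `S_n^{N,ε,η}(m,μ,α)`. -/
noncomputable def Sq (b N n : ℕ) (ε η α : ℝ) (m μ : Measure ℝ) : ℝ :=
  ∑ γ ∈ ({-1, 1} : Finset ℤ),
    (b : ℝ) ^ ((n : ℝ) * (α - (γ : ℝ) * ε) * (γ : ℝ) * η) *
      ∑ k ∈ Finset.range (b ^ n), ∑ l ∈ Finset.range (b ^ n),
        if ((k : ℤ) - (l : ℤ)).natAbs ≤ N then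
          (m (badicI b n k)).toReal * ((μ (badicI b n l)).toReal) ^ ((γ : ℝ) * η)
        else 0

/-- The set `E^μ_α(N,ε,γ)` at generation `n`. -/
noncomputable def Eset (b N n : ℕ) (ε α : ℝ) (γ : ℤ) (μ : Measure ℝ) : Set ℝ :=
  {t | t ∈ Set.Icc (0:ℝ) 1 ∧ ∀ k < b ^ n, ((k : ℤ) - (idx b n t : ℤ)).natAbs ≤ N →
    (b : ℝ) ^ ((γ : ℝ) * (n : ℝ) * (α - (γ : ℝ) * ε)) *
      ((μ (badicI b n k)).toReal) ^ ((γ : ℝ)) ≤ 1}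

lemma idx_lt (b n : ℕ) (hb : 2 ≤ b) (t : ℝ) : idx b n t < b ^ n := by
  have h1 : 0 < b ^ n := Nat.pow_pos (by omega)
  have : idx b n t ≤ b ^ n - 1 := min_le_right _ _
  omega

lemma mem_badicI_of_idx {b n : ℕ} (hb : 2 ≤ b) {t : ℝ} (ht : t ∈ Set.Icc (0:ℝ) 1) :
    t ∈ badicI b n (idx b n t) := by
  obtain ⟨ht0, ht1⟩ := ht
  have hM : (0:ℝ) < (b:ℝ) ^ n := by positivity
  have hMn : 1 ≤ b ^ n := Nat.one_le_pow n b (by omega)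
  rcases lt_or_eq_of_le ht1 with h | h
  · have htM : t * (b:ℝ) ^ n < (b:ℝ) ^ n := by nlinarith
    have hfl : ⌊t * (b:ℝ) ^ n⌋₊ < b ^ n := by
      rw [Nat.floor_lt (by positivity)]
      exact_mod_cast htM
    have hidx : idx b n t = ⌊t * (b:ℝ) ^ n⌋₊ := min_eq_left (by omega)
    rw [hidx]
    constructor
    · rw [div_le_iff₀ hM]
      exact Nat.floor_le (by positivity)
    · rw [le_div_iff₀ hM]
      exact (Nat.lt_floor_add_one _).le
  · subst h
    have hfl : ⌊(1:ℝ) * (b:ℝ) ^ n⌋₊ = b ^ n := by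
      rw [one_mul]
      exact_mod_cast Nat.floor_natCast (b ^ n)
    have hidx : idx b n 1 = b ^ n - 1 := by
      unfold idx; rw [hfl]; omega
    rw [hidx]
    have hc : ((b ^ n - 1 : ℕ) : ℝ) = (b:ℝ) ^ n - 1 := by
      push_cast [Nat.cast_sub hMn]; ring
    constructor
    · rw [hc, div_le_iff₀ hM]; nlinarith
    · rw [hc, le_div_iff₀ hM]; nlinarith


/-- The γ-term of `Sq`. -/
noncomputable def SqT (b N n : ℕ) (ε η α : ℝ) (γ : ℤ) (m μ : Measure ℝ) : ℝ :=
  (b : ℝ) ^ ((n : ℝ) * (α - (γ : ℝ) * ε) * (γ : ℝ) * η) *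
      ∑ k ∈ Finset.range (b ^ n), ∑ l ∈ Finset.range (b ^ n),
        if ((k : ℤ) - (l : ℤ)).natAbs ≤ N then
          (m (badicI b n k)).toReal * ((μ (badicI b n l)).toReal) ^ ((γ : ℝ) * η)
        else 0

lemma SqT_nonneg (b N n : ℕ) (ε η α : ℝ) (γ : ℤ) (m μ : Measure ℝ) :
    0 ≤ SqT b N n ε η α γ m μ := by
  apply mul_nonneg (Real.rpow_nonneg (by positivity) _)
  apply Finset.sum_nonneg; intro k _
  apply Finset.sum_nonneg; intro l _
  split
  · exact mul_nonneg ENNReal.toReal_nonneg (Real.rpow_nonneg ENNReal.toReal_nonneg _)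
  · exact le_rfl

lemma key_estimate_one (b N n : ℕ) (hb : 2 ≤ b) (ε η α : ℝ) (hη : 0 < η)
    (m μ : Measure ℝ) [IsFiniteMeasure m] [IsFiniteMeasure μ]
    (hμpos : ∀ l < b ^ n, 0 < μ (badicI b n l)) (γ : ℤ) :
    m (Set.Icc (0:ℝ) 1 \ Eset b N n ε α γ μ)
      ≤ ENNReal.ofReal (SqT b N n ε η α γ m μ) := by
  classical
  set M := b ^ n with hMdef
  have hbR : (1:ℝ) < (b:ℝ) := by exact_mod_cast (by omega : 1 < b)
  have hb0 : (0:ℝ) < (b:ℝ) := by linarith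
  set c : ℝ := (b : ℝ) ^ ((n : ℝ) * (α - (γ : ℝ) * ε) * (γ : ℝ) * η) with hcdef
  have hc : 0 < c := Real.rpow_pos_of_pos hb0 _
  set T := Set.Icc (0:ℝ) 1 \ Eset b N n ε α γ μ with hTdef
  -- cover by the b-adic cells
  have hcover : T ⊆ ⋃ v ∈ Finset.range M, (T ∩ {t | idx b n t = v}) := by
    intro t ht
    refine Set.mem_biUnion ?_ ⟨ht, rfl⟩
    exact Finset.mem_range.2 (idx_lt b n hb t)
  have step1 : m T ≤ ∑ v ∈ Finset.range M, m (T ∩ {t | idx b n t = v}) :=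
    (measure_mono hcover).trans (measure_biUnion_finset_le _ _)
  -- per-cell bound
  have hrow : ∀ v ∈ Finset.range M, m (T ∩ {t | idx b n t = v}) ≤
      ENNReal.ofReal (∑ l ∈ Finset.range M, c *
        if ((v : ℤ) - (l : ℤ)).natAbs ≤ N then
          (m (badicI b n v)).toReal * ((μ (badicI b n l)).toReal) ^ ((γ : ℝ) * η)
        else 0) := by
    intro v hv
    have hnonneg : ∀ l ∈ Finset.range M, 0 ≤ c *
        if ((v : ℤ) - (l : ℤ)).natAbs ≤ N then
          (m (badicI b n v)).toReal * ((μ (badicI b n l)).toReal) ^ ((γ : ℝ) * η)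
        else 0 := by
      intro l _
      apply mul_nonneg hc.le
      split
      · exact mul_nonneg ENNReal.toReal_nonneg (Real.rpow_nonneg ENNReal.toReal_nonneg _)
      · exact le_rfl
    rcases (T ∩ {t | idx b n t = v}).eq_empty_or_nonempty with he | ⟨t, ⟨htT, htv⟩⟩
    · rw [he, measure_empty]; exact zero_le
    · -- extract a bad index l₀
      obtain ⟨htI, htE⟩ := htT
      rw [Eset, Set.mem_setOf_eq, not_and] at htE
      push_neg at htE
      obtain ⟨l₀, hl₀M, hl₀N, hl₀⟩ := htE htI
      rw [htv] at hl₀N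
      -- the subset bound
      have hsub : T ∩ {t | idx b n t = v} ⊆ badicI b n v := by
        rintro s ⟨⟨hsI, -⟩, hsv⟩
        have := mem_badicI_of_idx (n := n) hb hsI
        rwa [hsv] at this
      have h1 : m (T ∩ {t | idx b n t = v}) ≤ m (badicI b n v) := measure_mono hsub
      rw [← ENNReal.ofReal_toReal (measure_ne_top m (badicI b n v))] at h1
      refine h1.trans (ENNReal.ofReal_le_ofReal ?_)
      -- single term dominates
      have hterm : (m (badicI b n v)).toReal ≤ c *
          if ((v : ℤ) - (l₀ : ℤ)).natAbs ≤ N then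
            (m (badicI b n v)).toReal * ((μ (badicI b n l₀)).toReal) ^ ((γ : ℝ) * η)
          else 0 := by
        rw [if_pos (show ((v : ℤ) - (l₀ : ℤ)).natAbs ≤ N by omega)]
        have hy : 0 < (μ (badicI b n l₀)).toReal :=
          ENNReal.toReal_pos (hμpos l₀ hl₀M).ne' (measure_ne_top _ _)
        set y := (μ (badicI b n l₀)).toReal
        have h1 : (1:ℝ) ≤ ((b:ℝ) ^ ((γ:ℝ) * (n:ℝ) * (α - (γ:ℝ) * ε)) * y ^ (γ:ℝ)) ^ η := by
          calc (1:ℝ) = 1 ^ η := (Real.one_rpow η).symm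
            _ ≤ _ := Real.rpow_le_rpow zero_le_one hl₀.le hη.le
        rw [Real.mul_rpow (Real.rpow_nonneg hb0.le _) (Real.rpow_nonneg hy.le _),
          ← Real.rpow_mul hb0.le, ← Real.rpow_mul hy.le] at h1
        have hex : (γ:ℝ) * (n:ℝ) * (α - (γ:ℝ) * ε) * η = (n:ℝ) * (α - (γ:ℝ) * ε) * (γ:ℝ) * η := by
          ring
        rw [hex, ← hcdef] at h1
        calc (m (badicI b n v)).toReal = (m (badicI b n v)).toReal * 1 := (mul_one _).symm
          _ ≤ (m (badicI b n v)).toReal * (c * y ^ ((γ:ℝ) * η)) :=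
            mul_le_mul_of_nonneg_left h1 ENNReal.toReal_nonneg
          _ = c * ((m (badicI b n v)).toReal * y ^ ((γ:ℝ) * η)) := by ring
      calc (m (badicI b n v)).toReal ≤ _ := hterm
        _ ≤ _ := Finset.single_le_sum hnonneg (Finset.mem_range.2 hl₀M)
  -- sum the rows
  have step2 : (∑ v ∈ Finset.range M, m (T ∩ {t | idx b n t = v})) ≤
      ENNReal.ofReal (∑ v ∈ Finset.range M, ∑ l ∈ Finset.range M, c *
        if ((v : ℤ) - (l : ℤ)).natAbs ≤ N then
          (m (badicI b n v)).toReal * ((μ (badicI b n l)).toReal) ^ ((γ : ℝ) * η)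
        else 0) := by
    rw [ENNReal.ofReal_sum_of_nonneg]
    · exact Finset.sum_le_sum hrow
    · intro v _
      apply Finset.sum_nonneg
      intro l _
      apply mul_nonneg hc.le
      split
      · exact mul_nonneg ENNReal.toReal_nonneg (Real.rpow_nonneg ENNReal.toReal_nonneg _)
      · exact le_rfl
  refine (step1.trans step2).trans (le_of_eq (congrArg ENNReal.ofReal ?_))
  rw [SqT, ← hcdef, ← hMdef, Finset.mul_sum]
  congr 1
  ext v
  rw [Finset.mul_sum]

lemma Sq_eq (b N n : ℕ) (ε η α : ℝ) (m μ : Measure ℝ) :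
    Sq b N n ε η α m μ = SqT b N n ε η α (-1) m μ + SqT b N n ε η α 1 m μ := by
  rw [Sq, Finset.sum_pair (by decide : (-1 : ℤ) ≠ 1)]; rfl

lemma key_estimate (b N n : ℕ) (hb : 2 ≤ b) (ε η α : ℝ) (hη : 0 < η)
    (m μ : Measure ℝ) [IsFiniteMeasure m] [IsFiniteMeasure μ]
    (hμpos : ∀ l < b ^ n, 0 < μ (badicI b n l)) :
    m (Set.Icc (0:ℝ) 1 \ (Eset b N n ε α (-1) μ ∩ Eset b N n ε α 1 μ))
      ≤ ENNReal.ofReal (Sq b N n ε η α m μ) := by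
  have hsub : Set.Icc (0:ℝ) 1 \ (Eset b N n ε α (-1) μ ∩ Eset b N n ε α 1 μ) ⊆
      (Set.Icc (0:ℝ) 1 \ Eset b N n ε α (-1) μ) ∪ (Set.Icc (0:ℝ) 1 \ Eset b N n ε α 1 μ) := by
    rintro t ⟨ht, hE⟩
    by_cases h : t ∈ Eset b N n ε α (-1) μ
    · exact Or.inr ⟨ht, fun h' => hE ⟨h, h'⟩⟩
    · exact Or.inl ⟨ht, h⟩
  calc m _ ≤ m ((Set.Icc (0:ℝ) 1 \ Eset b N n ε α (-1) μ) ∪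
        (Set.Icc (0:ℝ) 1 \ Eset b N n ε α 1 μ)) := measure_mono hsub
    _ ≤ m (Set.Icc (0:ℝ) 1 \ Eset b N n ε α (-1) μ) +
        m (Set.Icc (0:ℝ) 1 \ Eset b N n ε α 1 μ) := measure_union_le _ _
    _ ≤ ENNReal.ofReal (SqT b N n ε η α (-1) m μ) + ENNReal.ofReal (SqT b N n ε η α 1 m μ) :=
        add_le_add (key_estimate_one b N n hb ε η α hη m μ hμpos (-1))
          (key_estimate_one b N n hb ε η α hη m μ hμpos 1)
    _ = ENNReal.ofReal (Sq b N n ε η α m μ) := by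
        rw [Sq_eq, ENNReal.ofReal_add (SqT_nonneg ..) (SqT_nonneg ..)]


/-- Uniform growth speed in singularity sets.  Words `w ∈ A^j` are encoded by their index
`k < b^j`. -/
theorem uniform_growth_speed
    {Ω : Type*} [MeasurableSpace Ω] (P : Measure Ω) [IsProbabilityMeasure P]
    {Λ : Type*}
    (b : ℕ) (hb : 2 ≤ b) (N : ℕ) (hN : 1 ≤ N)
    (ε η : ℕ → ℝ) (hε : ∀ n, 1 ≤ n → 0 < ε n) (hη : ∀ n, 1 ≤ n → 0 < η n)
    (ρ : ℕ → ℝ) (hρ : ∀ j, 0 < ρ j)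
    (ψ Sj : ℕ → ℕ) (hψ : ∀ j, 0 < ψ j) (hS : ∀ j, 0 < Sj j) (hSψ : ∀ j, ψ j ≤ Sj j)
    (m μ : ℕ → ℕ → Λ → Ω → Measure ℝ)
    (hmfin : ∀ j k lam ω, IsFiniteMeasure (m j k lam ω))
    (hμfin : ∀ j k lam ω, IsFiniteMeasure (μ j k lam ω))
    (hmsupp : ∀ j k lam ω, m j k lam ω (Set.Icc (0:ℝ) 1)ᶜ = 0)
    (hμsupp : ∀ j k lam ω, μ j k lam ω (Set.Icc (0:ℝ) 1)ᶜ = 0)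
    (hμpos : ∀ j k lam ω n l, l < b ^ n → 0 < μ j k lam ω (badicI b n l))
    (a : Λ → ℝ) (ha : ∀ lam, 0 < a lam)
    (U : ℕ → ℕ → Ω → ℝ) (V : ℕ → ℕ → ℕ → Ω → ℝ)
    (U0 : Ω → ℝ) (V0 : ℕ → Ω → ℝ)
    (hU0meas : Measurable U0) (hV0meas : ∀ n, Measurable (V0 n))
    (hU0nn : ∀ ω, 0 ≤ U0 ω) (hV0nn : ∀ n ω, 0 ≤ V0 n ω)
    (hUmeas : ∀ j k, Measurable (U j k)) (hVmeas : ∀ j k n, Measurable (V j k n))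
    (hUnn : ∀ j k ω, 0 ≤ U j k ω) (hVnn : ∀ j k n ω, 0 ≤ V j k n ω)
    -- (i) identical distribution of the vectors `(U^w, (V^w_n)_n)`
    (hident : ∀ j k, k < b ^ j →
      Measure.map (fun ω => (U j k ω, fun n => V j k n ω)) P
        = Measure.map (fun ω => (U0 ω, fun n => V0 n ω)) P)
    -- (ii) almost sure bounds
    (hbound : ∀ᵐ ω ∂P, ∀ j k, k < b ^ j → ∀ n, ψ j ≤ n → ∀ lam : Λ,
      U j k ω ≤ (m j k lam ω (Set.Icc (0:ℝ) 1)).toReal ∧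
      Sq b N n (ε n) (η n) (a lam) (m j k lam ω) (μ j k lam ω) ≤ V j k n ω)
    -- summability conditions
    (hsumU : (∑' j : ℕ, ENNReal.ofReal ((b:ℝ) ^ j) *
        P {ω | U0 ω ≤ (b:ℝ) ^ (-(ρ j))}) ≠ ⊤)
    (hsumV : (∑' j : ℕ, ENNReal.ofReal ((b:ℝ) ^ j * (b:ℝ) ^ (ρ j)) *
        ∑' n : ℕ, ∫⁻ ω, ENNReal.ofReal (V0 (Sj j + n) ω) ∂P) ≠ ⊤) :
    ∀ᵐ ω ∂P, ∃ J : ℕ, ∀ j, J ≤ j → ∀ k, k < b ^ j → ∀ lam : Λ,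
      (m j k lam ω) (Set.Icc (0:ℝ) 1) / 2 ≤
        (m j k lam ω) (⋂ n ∈ {n : ℕ | Sj j ≤ n},
          (Eset b N n (ε n) (a lam) (-1) (μ j k lam ω) ∩
           Eset b N n (ε n) (a lam) 1 (μ j k lam ω))) := by
  classical
  have hbR : (1:ℝ) < (b:ℝ) := by exact_mod_cast (by omega : 1 < b)
  have hb0 : (0:ℝ) < (b:ℝ) := by linarith
  have hcU : ∀ j, (0:ℝ) < (b:ℝ) ^ (-(ρ j)) := fun j => Real.rpow_pos_of_pos hb0 _
  have hFmeas : ∀ j k, Measurable (fun ω => (U j k ω, fun n => V j k n ω)) :=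
    fun j k => (hUmeas j k).prod (measurable_pi_lambda _ fun n => hVmeas j k n)
  have hF0meas : Measurable (fun ω => (U0 ω, fun n => V0 n ω)) :=
    hU0meas.prod (measurable_pi_lambda _ fun n => hV0meas n)
  -- distribution transfer for U
  have hUdist : ∀ j k, k < b ^ j → ∀ c : ℝ,
      P {ω | U j k ω ≤ c} = P {ω | U0 ω ≤ c} := by
    intro j k hk c
    have hset : MeasurableSet {p : ℝ × (ℕ → ℝ) | p.1 ≤ c} :=
      measurable_fst measurableSet_Iic
    have h1 : P {ω | U j k ω ≤ c}
        = Measure.map (fun ω => (U j k ω, fun n => V j k n ω)) P {p | p.1 ≤ c} := by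
      rw [Measure.map_apply (hFmeas j k) hset]; rfl
    have h2 : P {ω | U0 ω ≤ c}
        = Measure.map (fun ω => (U0 ω, fun n => V0 n ω)) P {p | p.1 ≤ c} := by
      rw [Measure.map_apply hF0meas hset]; rfl
    rw [h1, h2, hident j k hk]
  -- distribution transfer for V
  have hVdist : ∀ j k, k < b ^ j → ∀ nn : ℕ,
      ∫⁻ ω, ENNReal.ofReal (V j k nn ω) ∂P = ∫⁻ ω, ENNReal.ofReal (V0 nn ω) ∂P := by
    intro j k hk nn
    have hg : Measurable (fun p : ℝ × (ℕ → ℝ) => ENNReal.ofReal (p.2 nn)) :=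
      ENNReal.measurable_ofReal.comp ((measurable_pi_apply nn).comp measurable_snd)
    calc ∫⁻ ω, ENNReal.ofReal (V j k nn ω) ∂P
        = ∫⁻ p, ENNReal.ofReal (p.2 nn)
            ∂(Measure.map (fun ω => (U j k ω, fun n => V j k n ω)) P) :=
          (lintegral_map hg (hFmeas j k)).symm
      _ = ∫⁻ p, ENNReal.ofReal (p.2 nn)
            ∂(Measure.map (fun ω => (U0 ω, fun n => V0 n ω)) P) := by rw [hident j k hk]
      _ = _ := lintegral_map hg hF0meas
  -- bad events
  set A : ℕ → Set Ω := fun j =>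
    ⋃ k ∈ Finset.range (b ^ j), {ω | U j k ω ≤ (b:ℝ) ^ (-(ρ j))} with hAdef
  set B : ℕ → Set Ω := fun j => ⋃ k ∈ Finset.range (b ^ j),
    {ω | ENNReal.ofReal ((b:ℝ) ^ (-(ρ j)) / 2) <
      ∑' i, ENNReal.ofReal (V j k (Sj j + i) ω)} with hBdef
  have hA : ∀ j, P (A j) ≤ ENNReal.ofReal ((b:ℝ) ^ j) *
      P {ω | U0 ω ≤ (b:ℝ) ^ (-(ρ j))} := by
    intro j
    calc P (A j) ≤ ∑ k ∈ Finset.range (b ^ j), P {ω | U j k ω ≤ (b:ℝ) ^ (-(ρ j))} :=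
        measure_biUnion_finset_le _ _
      _ = ∑ k ∈ Finset.range (b ^ j), P {ω | U0 ω ≤ (b:ℝ) ^ (-(ρ j))} :=
        Finset.sum_congr rfl fun k hk => hUdist j k (Finset.mem_range.1 hk) _
      _ = (b ^ j : ℕ) • P {ω | U0 ω ≤ (b:ℝ) ^ (-(ρ j))} := by
        rw [Finset.sum_const, Finset.card_range]
      _ = ENNReal.ofReal ((b:ℝ) ^ j) * P {ω | U0 ω ≤ (b:ℝ) ^ (-(ρ j))} := by
        rw [nsmul_eq_mul]
        congr 1
        rw [show ((b:ℝ)) ^ j = ((b ^ j : ℕ) : ℝ) by push_cast; ring, ENNReal.ofReal_natCast]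
  have hB : ∀ j, P (B j) ≤ 2 * (ENNReal.ofReal ((b:ℝ) ^ j * (b:ℝ) ^ (ρ j)) *
      ∑' i, ∫⁻ ω, ENNReal.ofReal (V0 (Sj j + i) ω) ∂P) := by
    intro j
    have hBk : ∀ k, k < b ^ j →
        P {ω | ENNReal.ofReal ((b:ℝ) ^ (-(ρ j)) / 2) <
            ∑' i, ENNReal.ofReal (V j k (Sj j + i) ω)}
        ≤ ENNReal.ofReal (2 * (b:ℝ) ^ (ρ j)) *
            ∑' i, ∫⁻ ω, ENNReal.ofReal (V0 (Sj j + i) ω) ∂P := by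
      intro k hk
      have hfmeas : Measurable (fun ω => ∑' i, ENNReal.ofReal (V j k (Sj j + i) ω)) :=
        Measurable.ennreal_tsum fun i => ENNReal.measurable_ofReal.comp (hVmeas j k (Sj j + i))
      have hcpos : (0:ℝ) < (b:ℝ) ^ (-(ρ j)) / 2 := by have := hcU j; linarith
      have he0 : ENNReal.ofReal ((b:ℝ) ^ (-(ρ j)) / 2) ≠ 0 := by
        simp only [ne_eq, ENNReal.ofReal_eq_zero, not_le]; exact hcpos
      have hinv : ((b:ℝ) ^ (-(ρ j)) / 2)⁻¹ = 2 * (b:ℝ) ^ (ρ j) := by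
        rw [Real.rpow_neg hb0.le, inv_div, div_eq_mul_inv, inv_inv]
      calc P {ω | ENNReal.ofReal ((b:ℝ) ^ (-(ρ j)) / 2) <
            ∑' i, ENNReal.ofReal (V j k (Sj j + i) ω)}
          ≤ P {ω | ENNReal.ofReal ((b:ℝ) ^ (-(ρ j)) / 2) ≤
            ∑' i, ENNReal.ofReal (V j k (Sj j + i) ω)} :=
          measure_mono fun ω h => le_of_lt (Set.mem_setOf_eq ▸ h)
        _ ≤ (∫⁻ ω, ∑' i, ENNReal.ofReal (V j k (Sj j + i) ω) ∂P) /
            ENNReal.ofReal ((b:ℝ) ^ (-(ρ j)) / 2) :=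
          meas_ge_le_lintegral_div hfmeas.aemeasurable he0 ENNReal.ofReal_ne_top
        _ = (∑' i, ∫⁻ ω, ENNReal.ofReal (V j k (Sj j + i) ω) ∂P) /
            ENNReal.ofReal ((b:ℝ) ^ (-(ρ j)) / 2) := by
          rw [lintegral_tsum (f := fun i ω => ENNReal.ofReal (V j k (Sj j + i) ω)) fun i =>
            (ENNReal.measurable_ofReal.comp (hVmeas j k (Sj j + i))).aemeasurable]
        _ = (∑' i, ∫⁻ ω, ENNReal.ofReal (V0 (Sj j + i) ω) ∂P) /
            ENNReal.ofReal ((b:ℝ) ^ (-(ρ j)) / 2) := by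
          congr 1
          exact tsum_congr fun i => hVdist j k hk _
        _ = (∑' i, ∫⁻ ω, ENNReal.ofReal (V0 (Sj j + i) ω) ∂P) *
            ENNReal.ofReal (2 * (b:ℝ) ^ (ρ j)) := by
          rw [div_eq_mul_inv, ← ENNReal.ofReal_inv_of_pos hcpos, hinv]
        _ = _ := mul_comm _ _
    calc P (B j) ≤ ∑ k ∈ Finset.range (b ^ j),
        P {ω | ENNReal.ofReal ((b:ℝ) ^ (-(ρ j)) / 2) <
            ∑' i, ENNReal.ofReal (V j k (Sj j + i) ω)} := measure_biUnion_finset_le _ _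
      _ ≤ ∑ k ∈ Finset.range (b ^ j), ENNReal.ofReal (2 * (b:ℝ) ^ (ρ j)) *
            ∑' i, ∫⁻ ω, ENNReal.ofReal (V0 (Sj j + i) ω) ∂P :=
        Finset.sum_le_sum fun k hk => hBk k (Finset.mem_range.1 hk)
      _ = (b ^ j : ℕ) • (ENNReal.ofReal (2 * (b:ℝ) ^ (ρ j)) *
            ∑' i, ∫⁻ ω, ENNReal.ofReal (V0 (Sj j + i) ω) ∂P) := by
        rw [Finset.sum_const, Finset.card_range]
      _ = 2 * (ENNReal.ofReal ((b:ℝ) ^ j * (b:ℝ) ^ (ρ j)) *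
            ∑' i, ∫⁻ ω, ENNReal.ofReal (V0 (Sj j + i) ω) ∂P) := by
        rw [nsmul_eq_mul, ← mul_assoc, ← mul_assoc]
        congr 1
        rw [show ((b ^ j : ℕ) : ENNReal) = ENNReal.ofReal ((b:ℝ) ^ j) by
          rw [show ((b:ℝ)) ^ j = ((b ^ j : ℕ) : ℝ) by push_cast; ring, ENNReal.ofReal_natCast],
          ← ENNReal.ofReal_mul (by positivity), ← ENNReal.ofReal_ofNat 2,
          ← ENNReal.ofReal_mul (by norm_num)]
        congr 1
        ring
  -- Borel--Cantelli
  have hsum : (∑' j : ℕ, P (A j ∪ B j)) ≠ ⊤ := by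
    have hle : ∀ j, P (A j ∪ B j) ≤ ENNReal.ofReal ((b:ℝ) ^ j) *
        P {ω | U0 ω ≤ (b:ℝ) ^ (-(ρ j))}
        + 2 * (ENNReal.ofReal ((b:ℝ) ^ j * (b:ℝ) ^ (ρ j)) *
            ∑' i, ∫⁻ ω, ENNReal.ofReal (V0 (Sj j + i) ω) ∂P) :=
      fun j => (measure_union_le _ _).trans (add_le_add (hA j) (hB j))
    refine ne_top_of_le_ne_top ?_ (ENNReal.tsum_le_tsum hle)
    rw [ENNReal.tsum_add, ENNReal.tsum_mul_left]
    exact ENNReal.add_ne_top.2 ⟨hsumU, ENNReal.mul_ne_top (by norm_num) hsumV⟩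
  filter_upwards [ae_eventually_notMem hsum, hbound] with ω hω hbω
  obtain ⟨J, hJ⟩ := Filter.eventually_atTop.1 hω
  refine ⟨J, fun j hj k hk lam => ?_⟩
  have hnot := hJ j hj
  have hnotA : ω ∉ A j := fun h => hnot (Set.mem_union_left _ h)
  have hnotB : ω ∉ B j := fun h => hnot (Set.mem_union_right _ h)
  have hU' : (b:ℝ) ^ (-(ρ j)) < U j k ω := by
    by_contra h
    exact hnotA (Set.mem_biUnion (Finset.mem_range.2 hk) (not_lt.1 h))
  have hV' : (∑' i, ENNReal.ofReal (V j k (Sj j + i) ω)) ≤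
      ENNReal.ofReal ((b:ℝ) ^ (-(ρ j)) / 2) := by
    by_contra h
    exact hnotB (Set.mem_biUnion (Finset.mem_range.2 hk) (not_le.1 h))
  haveI := hmfin j k lam ω
  haveI := hμfin j k lam ω
  have hmassU : (b:ℝ) ^ (-(ρ j)) < (m j k lam ω (Set.Icc (0:ℝ) 1)).toReal :=
    lt_of_lt_of_le hU' (hbω j k hk (ψ j) le_rfl lam).1
  set X := ⋂ n ∈ {n : ℕ | Sj j ≤ n},
      (Eset b N n (ε n) (a lam) (-1) (μ j k lam ω) ∩
       Eset b N n (ε n) (a lam) 1 (μ j k lam ω)) with hXdef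
  have htail : m j k lam ω (Set.Icc (0:ℝ) 1 \ X) ≤
      ENNReal.ofReal ((b:ℝ) ^ (-(ρ j)) / 2) := by
    have hsub : Set.Icc (0:ℝ) 1 \ X ⊆ ⋃ i : ℕ,
        (Set.Icc (0:ℝ) 1 \
          (Eset b N (Sj j + i) (ε (Sj j + i)) (a lam) (-1) (μ j k lam ω) ∩
           Eset b N (Sj j + i) (ε (Sj j + i)) (a lam) 1 (μ j k lam ω))) := by
      rintro t ⟨ht, hnott⟩
      rw [hXdef] at hnott
      simp only [Set.mem_iInter, Set.mem_setOf_eq, not_forall] at hnott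
      obtain ⟨n, hn, htn⟩ := hnott
      exact Set.mem_iUnion.2 ⟨n - Sj j, ht, by rwa [Nat.add_sub_cancel' hn]⟩
    calc m j k lam ω (Set.Icc (0:ℝ) 1 \ X)
        ≤ ∑' i : ℕ, m j k lam ω (Set.Icc (0:ℝ) 1 \
            (Eset b N (Sj j + i) (ε (Sj j + i)) (a lam) (-1) (μ j k lam ω) ∩
             Eset b N (Sj j + i) (ε (Sj j + i)) (a lam) 1 (μ j k lam ω))) :=
          (measure_mono hsub).trans (measure_iUnion_le _)
      _ ≤ ∑' i : ℕ, ENNReal.ofReal (V j k (Sj j + i) ω) := by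
        apply ENNReal.tsum_le_tsum
        intro i
        have hn : ψ j ≤ Sj j + i := le_trans (hSψ j) (Nat.le_add_right _ _)
        have h1 : 1 ≤ Sj j + i := le_trans (hS j) (Nat.le_add_right _ _)
        refine le_trans (key_estimate b N (Sj j + i) hb _ _ _ (hη _ h1)
            (m j k lam ω) (μ j k lam ω) (fun l hl => hμpos j k lam ω _ l hl)) ?_
        exact ENNReal.ofReal_le_ofReal (hbω j k hk _ hn lam).2
      _ ≤ _ := hV'
  have hhalf : ENNReal.ofReal ((b:ℝ) ^ (-(ρ j)) / 2) ≤
      m j k lam ω (Set.Icc (0:ℝ) 1) / 2 := by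
    rw [ENNReal.le_div_iff_mul_le (Or.inl two_ne_zero) (Or.inl ENNReal.ofNat_ne_top),
      ← ENNReal.ofReal_ofNat 2, ← ENNReal.ofReal_mul (by positivity),
      div_mul_cancel₀ _ (two_ne_zero),
      ← ENNReal.ofReal_toReal (measure_ne_top (m j k lam ω) (Set.Icc (0:ℝ) 1))]
    exact ENNReal.ofReal_le_ofReal hmassU.le
  have hfinal : m j k lam ω (Set.Icc (0:ℝ) 1) ≤
      m j k lam ω X + m j k lam ω (Set.Icc (0:ℝ) 1) / 2 := by
    calc m j k lam ω (Set.Icc (0:ℝ) 1)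
        = m j k lam ω ((Set.Icc (0:ℝ) 1 ∩ X) ∪ (Set.Icc (0:ℝ) 1 \ X)) := by
          rw [Set.inter_union_diff]
      _ ≤ m j k lam ω (Set.Icc (0:ℝ) 1 ∩ X) + m j k lam ω (Set.Icc (0:ℝ) 1 \ X) :=
          measure_union_le _ _
      _ ≤ m j k lam ω X + m j k lam ω (Set.Icc (0:ℝ) 1) / 2 :=
          add_le_add (measure_mono Set.inter_subset_right) (htail.trans hhalf)
  have hne : m j k lam ω (Set.Icc (0:ℝ) 1) / 2 ≠ ⊤ :=
    (ENNReal.div_lt_top (measure_ne_top _ _) two_ne_zero).ne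
  rw [← ENNReal.add_le_add_iff_right hne, ENNReal.add_halves]
  exact hfinal
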